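/- Let p, q be nonzero complex numbers. A quadruple (F₁₁, F₁₂, F₂₁, F₂₂) of complex numbers satisfies the system F₂₂ + p·F₁₁ = 1, F₂₁ + p·F₁₂ = p, F₁₂·F₂₂ = 0, F₁₁·F₂₁ = 1 - F₁₂ - F₂₂, F₁₁ = q·(1 - F₁₂), and F₂₁ = q⁻¹·(1 - F₂₂) if and only if either (F₁₁, F₁₂, F₂₁, F₂₂) = (q, 0, p, 1 - pq) (type I) or (F₁₁, F₁₂, F₂₁, F₂₂) = (p⁻¹, 1 - (pq)⁻¹, q⁻¹, 0) (type II). -/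
import Mathlib


/-- The consistency conditions of the two-parameter differential calculus on the
quantum exterior plane admit exactly two solutions: type I
`(F₁₁, F₁₂, F₂₁, F₂₂) = (q, 0, p, 1 - pq)` and type II
`(F₁₁, F₁₂, F₂₁, F₂₂) = (p⁻¹, 1 - (pq)⁻¹, q⁻¹, 0)`. -/
theorem structure_constants_two_solutions (p q : ℂ) (hp : p ≠ 0) (hq : q ≠ 0)
    (F11 F12 F21 F22 : ℂ) :
    (F22 + p * F11 = 1 ∧ F21 + p * F12 = p ∧ F12 * F22 = 0 ∧
        F11 * F21 = 1 - F12 - F22 ∧ F11 = q * (1 - F12) ∧ F21 = q⁻¹ * (1 - F22)) ↔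
      ((F11 = q ∧ F12 = 0 ∧ F21 = p ∧ F22 = 1 - p * q) ∨
        (F11 = p⁻¹ ∧ F12 = 1 - (p * q)⁻¹ ∧ F21 = q⁻¹ ∧ F22 = 0)) := by
  constructor
  · rintro ⟨h1, h2, h3, h4, h5, h6⟩
    rcases mul_eq_zero.mp h3 with h0 | h0
    · left
      have hF11 : F11 = q := by linear_combination h5 - q * h0
      exact ⟨hF11, h0, by linear_combination h2 - p * h0,
        by linear_combination h1 - p * hF11⟩
    · right
      have h21 : F21 = q⁻¹ := by linear_combination h6 - q⁻¹ * h0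
      have hp1 : p * F11 = 1 := by linear_combination h1 - h0
      have h11 : F11 = p⁻¹ := by field_simp; linear_combination hp1
      have key : p * q * F12 = p * q - 1 := by linear_combination p * h5 - hp1
      have h12 : F12 = 1 - (p * q)⁻¹ := by
        field_simp
        linear_combination key
      exact ⟨h11, h12, h21, h0⟩
  · rintro (⟨a, b, c, d⟩ | ⟨a, b, c, d⟩) <;> subst a <;> subst b <;> subst c <;> subst d <;>
      refine ⟨?_, ?_, ?_, ?_, ?_, ?_⟩ <;> field_simp <;> ring
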